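/- Let K ≥ 1 be an integer, let σ_N² > 0, σ_X² ≥ 0, and let D > σ_N²/K. Then the set { ∑_{k=1}^K r_k + (1/2)·log(1 + σ_X²/D) : r_1, …, r_K ≥ 0 and ∑_{k=1}^K (1 − exp(−2r_k))/σ_N² = 1/D } has least element (K/2)·log(1 + σ_N²/(K·D − σ_N²)) + (1/2)·log(1 + σ_X²/D); in particular the minimum is attained at the symmetric point r_1 = … = r_K = (1/2)·log(K·D/(K·D − σ_N²)). -/

import Mathlib

open Real

/-- Closed form of the sum-rate-distortion function for `K` homogeneous worker nodes:
the set of achievable sum rates has least element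
`(K/2)·log(1 + σ_N²/(K·D − σ_N²)) + (1/2)·log(1 + σ_X²/D)`, attained at the symmetric point
`r_1 = … = r_K = (1/2)·log(K·D/(K·D − σ_N²))`. -/
theorem sum_rate_distortion_function
    (K : ℕ) (hK : 1 ≤ K) (σN2 σX2 D : ℝ) (hσN2 : 0 < σN2) (hσX2 : 0 ≤ σX2)
    (hD : σN2 / K < D) :
    IsLeast
      { s : ℝ | ∃ r : Fin K → ℝ, (∀ k, 0 ≤ r k) ∧
          (∑ k, (1 - Real.exp (-2 * r k)) / σN2 = 1 / D) ∧
          s = (∑ k, r k) + (1 / 2) * Real.log (1 + σX2 / D) }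
      ((K / 2 : ℝ) * Real.log (1 + σN2 / (K * D - σN2))
        + (1 / 2) * Real.log (1 + σX2 / D)) ∧
    (∀ k : Fin K, (0 : ℝ) ≤ (1 / 2) * Real.log (K * D / (K * D - σN2))) ∧
    (∑ _k : Fin K, (1 - Real.exp (-2 * ((1 / 2) * Real.log (K * D / (K * D - σN2))))) / σN2
        = 1 / D) ∧
    ((∑ _k : Fin K, (1 / 2) * Real.log (K * D / (K * D - σN2)))
        + (1 / 2) * Real.log (1 + σX2 / D)
      = (K / 2 : ℝ) * Real.log (1 + σN2 / (K * D - σN2))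
        + (1 / 2) * Real.log (1 + σX2 / D)) := by
  have hK0 : (0:ℝ) < (K:ℝ) := by exact_mod_cast hK
  have hD0 : 0 < D := (div_pos hσN2 hK0).trans hD
  have hP : 0 < (K:ℝ) * D - σN2 := by
    rw [div_lt_iff₀ hK0] at hD
    nlinarith
  have hKD : 0 < (K:ℝ) * D := by positivity
  have hc0 : 0 < (K:ℝ) * D / ((K:ℝ) * D - σN2) := by positivity
  have hc1 : 1 ≤ (K:ℝ) * D / ((K:ℝ) * D - σN2) := (one_le_div hP).mpr (by linarith)
  have hlogc : Real.log (1 + σN2 / ((K:ℝ) * D - σN2))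
      = Real.log ((K:ℝ) * D / ((K:ℝ) * D - σN2)) := by
    congr 1
    field_simp
    ring
  have hexp : Real.exp (-2 * ((1/2) * Real.log ((K:ℝ) * D / ((K:ℝ) * D - σN2))))
      = ((K:ℝ) * D - σN2) / ((K:ℝ) * D) := by
    rw [show (-2 * ((1/2) * Real.log ((K:ℝ) * D / ((K:ℝ) * D - σN2))))
        = Real.log (((K:ℝ) * D / ((K:ℝ) * D - σN2))⁻¹) by rw [Real.log_inv]; ring]
    rw [Real.exp_log (by positivity), inv_div]
  have hconst : (∑ _k : Fin K, (1 - Real.exp (-2 * ((1/2) *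
      Real.log ((K:ℝ) * D / ((K:ℝ) * D - σN2))))) / σN2 = 1 / D) := by
    rw [hexp, Finset.sum_const, Finset.card_fin, nsmul_eq_mul]
    field_simp
    ring
  refine ⟨⟨⟨fun _ => (1/2) * Real.log ((K:ℝ) * D / ((K:ℝ) * D - σN2)), ?_, hconst, ?_⟩, ?_⟩,
    ?_, hconst, ?_⟩
  · intro k
    have := Real.log_nonneg hc1
    linarith
  · rw [Finset.sum_const, Finset.card_fin, nsmul_eq_mul, hlogc]
    ring
  · -- lower bound
    rintro s ⟨r, hr, hcon, rfl⟩
    have hEsum : ∑ k, Real.exp (-2 * r k) = (K:ℝ) - σN2 / D := by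
      rw [← Finset.sum_div, div_eq_div_iff hσN2.ne' hD0.ne'] at hcon
      rw [Finset.sum_sub_distrib, Finset.sum_const, Finset.card_fin, nsmul_eq_mul,
        mul_one] at hcon
      have : ∑ k, Real.exp (-2 * r k) = (K:ℝ) - σN2 * 1 / D := by
        field_simp at hcon ⊢
        linarith
      simpa using this
    have hsum : ∑ k, (-2 * r k + Real.log ((K:ℝ) * D / ((K:ℝ) * D - σN2)))
        ≤ ∑ k, (Real.exp (-2 * r k) * ((K:ℝ) * D / ((K:ℝ) * D - σN2)) - 1) := by
      refine Finset.sum_le_sum fun k _ => ?_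
      have h1 := Real.log_le_sub_one_of_pos
        (show 0 < Real.exp (-2 * r k) * ((K:ℝ) * D / ((K:ℝ) * D - σN2)) by positivity)
      rwa [Real.log_mul (Real.exp_ne_zero _) (ne_of_gt hc0), Real.log_exp] at h1
    rw [Finset.sum_add_distrib, Finset.sum_sub_distrib, ← Finset.sum_mul] at hsum
    simp only [Finset.sum_const, Finset.card_fin, nsmul_eq_mul, mul_one] at hsum
    rw [hEsum] at hsum
    have hmul : ((K:ℝ) - σN2 / D) * ((K:ℝ) * D / ((K:ℝ) * D - σN2)) = (K:ℝ) := by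
      field_simp
    rw [hmul] at hsum
    have hS : ∑ k, (-2 * r k) = -2 * ∑ k, r k := by
      rw [← Finset.mul_sum]
    rw [hS] at hsum
    rw [hlogc]
    nlinarith [hsum]
  · intro k
    have := Real.log_nonneg hc1
    linarith
  · rw [Finset.sum_const, Finset.card_fin, nsmul_eq_mul, hlogc]
    ring
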